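/- Let (S, X, V) be jointly distributed random variables on finite sets such that S and X are conditionally independent given V. Then the total variation distance between the joint distribution (S, X) and the product of its marginals S ⊗ X is at most E_{s∼S}[dTV(V | S=s, V)], and hence at most √(I(S;V)/2). -/

import Mathlib

open Finset

set_option linter.unusedSectionVars false

def IsDist {α : Type*} [Fintype α] (p : α → ℝ) : Prop :=
  (∀ x, 0 ≤ p x) ∧ ∑ x, p x = 1

noncomputable def dTV {α : Type*} [Fintype α] (p q : α → ℝ) : ℝ :=
  (1 / 2) * ∑ x, |p x - q x|

noncomputable def mutualInfo {α β : Type*} [Fintype α] [Fintype β]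
    (j : α × β → ℝ) : ℝ :=
  ∑ p : α × β,
    if j p = 0 then 0
    else j p * Real.log (j p / ((∑ b, j (p.1, b)) * (∑ a, j (a, p.2))))


lemma log_ge_one_sub_inv {t : ℝ} (ht : 0 < t) : 1 - 1/t ≤ Real.log t := by
  simpa [one_div] using Real.one_sub_inv_le_log_of_pos ht

lemma one_var_ineq {t : ℝ} (ht : 0 < t) :
    3*(t-1)^2 ≤ (2*t+4)*(t*Real.log t - t + 1) := by
  set g : ℝ → ℝ := fun x => (x+1)*Real.log x - 2*(x-1) with hg_def
  set h : ℝ → ℝ := fun x => (2*x+4)*(x*Real.log x - x + 1) - 3*(x-1)^2 with hh_def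
  have hg_deriv : ∀ x : ℝ, 0 < x → HasDerivAt g (Real.log x + 1/x - 1) x := by
    intro x hx
    have h1 : HasDerivAt (fun y : ℝ => (y+1)*Real.log y)
        (1 * Real.log x + (x+1) * x⁻¹) x := by
      exact ((hasDerivAt_id x).add_const 1).mul (Real.hasDerivAt_log hx.ne')
    have h2 : HasDerivAt (fun y : ℝ => 2*(y-1)) 2 x := by
      simpa using ((hasDerivAt_id x).sub_const 1).const_mul 2
    have := h1.sub h2
    convert this using 1
    · rfl
    · rfl
    · rfl
    field_simp
    try ring
  have hh_deriv : ∀ x : ℝ, 0 < x → HasDerivAt h (4 * g x) x := by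
    intro x hx
    have h1 : HasDerivAt (fun y : ℝ => y*Real.log y - y + 1)
        (1 * Real.log x + x * x⁻¹ - 1) x := by
      simpa using (((hasDerivAt_id x).mul (Real.hasDerivAt_log hx.ne')).sub (hasDerivAt_id x)).add_const 1
    have h2 : HasDerivAt (fun y : ℝ => 2*y+4) 2 x := by
      simpa using ((hasDerivAt_id x).const_mul 2).add_const 4
    have h3 : HasDerivAt (fun y : ℝ => (2*y+4)*(y*Real.log y - y + 1))
        (2 * (x*Real.log x - x + 1) + (2*x+4) * (1 * Real.log x + x * x⁻¹ - 1)) x := h2.mul h1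
    have h4 : HasDerivAt (fun y : ℝ => 3*(y-1)^2) (3*(2*(x-1))) x := by
      simpa using (((hasDerivAt_id x).sub_const 1).pow 2).const_mul 3
    have := h3.sub h4
    convert this using 1
    · rfl
    · rfl
    · rfl
    simp only [hg_def]
    field_simp
    try ring
  have hgmono : MonotoneOn g (Set.Ioi (0:ℝ)) := by
    apply monotoneOn_of_deriv_nonneg (convex_Ioi 0)
    · intro x hx
      exact ((hg_deriv x hx).differentiableAt).continuousAt.continuousWithinAt
    · intro x hx
      rw [interior_Ioi] at hx
      exact ((hg_deriv x hx).differentiableAt).differentiableWithinAt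
    · intro x hx
      rw [interior_Ioi] at hx
      rw [(hg_deriv x hx).deriv]
      have := log_ge_one_sub_inv hx
      linarith
  have hg1 : g 1 = 0 := by simp [hg_def]
  have hh1 : h 1 = 0 := by simp [hh_def]
  have key : 0 ≤ h t := by
    rcases le_total 1 t with h1t | ht1
    · have hmono : MonotoneOn h (Set.Ici (1:ℝ)) := by
        apply monotoneOn_of_deriv_nonneg (convex_Ici 1)
        · intro x hx
          have hx0 : (0:ℝ) < x := lt_of_lt_of_le one_pos hx
          exact ((hh_deriv x hx0).differentiableAt).continuousAt.continuousWithinAt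
        · intro x hx
          rw [interior_Ici] at hx
          exact ((hh_deriv x (lt_trans one_pos hx)).differentiableAt).differentiableWithinAt
        · intro x hx
          rw [interior_Ici] at hx
          have hx0 : (0:ℝ) < x := lt_trans one_pos hx
          rw [(hh_deriv x hx0).deriv]
          have : g 1 ≤ g x := hgmono (Set.mem_Ioi.2 one_pos) (Set.mem_Ioi.2 hx0) hx.le
          rw [hg1] at this
          linarith
      have := hmono (Set.mem_Ici.2 le_rfl) (Set.mem_Ici.2 h1t) h1t
      rw [hh1] at this
      linarith [this]
    · have hanti : AntitoneOn h (Set.Ioc (0:ℝ) 1) := by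
        apply antitoneOn_of_deriv_nonpos (convex_Ioc 0 1)
        · intro x hx
          exact ((hh_deriv x hx.1).differentiableAt).continuousAt.continuousWithinAt
        · intro x hx
          rw [interior_Ioc] at hx
          exact ((hh_deriv x hx.1).differentiableAt).differentiableWithinAt
        · intro x hx
          rw [interior_Ioc] at hx
          rw [(hh_deriv x hx.1).deriv]
          have : g x ≤ g 1 := hgmono (Set.mem_Ioi.2 hx.1) (Set.mem_Ioi.2 one_pos) hx.2.le
          rw [hg1] at this
          linarith
      have := hanti (Set.mem_Ioc.2 ⟨ht, ht1⟩) (Set.mem_Ioc.2 ⟨one_pos, le_rfl⟩) ht1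
      rw [hh1] at this
      linarith [this]
  simp only [hh_def] at key
  linarith

lemma pinsker_pointwise {a b : ℝ} (ha : 0 ≤ a) (hb : 0 < b) :
    3*(a-b)^2 ≤ (2*a+4*b)*(a*Real.log (a/b) - a + b) := by
  rcases eq_or_lt_of_le ha with h0 | ha'
  · rw [← h0]
    simp only [zero_mul, zero_sub, zero_div]
    nlinarith
  · have ht : 0 < a/b := div_pos ha' hb
    have h := one_var_ineq ht
    have hb' : b ≠ 0 := hb.ne'
    have e1 : 3*(a-b)^2 = b^2 * (3*(a/b-1)^2) := by field_simp; try ring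
    have e2 : (2*a+4*b)*(a*Real.log (a/b) - a + b)
        = b^2 * ((2*(a/b)+4)*((a/b)*Real.log (a/b) - (a/b) + 1)) := by
      field_simp; try ring
    rw [e1, e2]
    exact mul_le_mul_of_nonneg_left h (sq_nonneg b)

lemma pinsker_sum {ι : Type*} [Fintype ι] (a b : ι → ℝ)
    (ha : ∀ i, 0 ≤ a i) (hb : ∀ i, 0 ≤ b i) (hab : ∀ i, b i = 0 → a i = 0)
    (hsa : ∑ i, a i = 1) (hsb : ∑ i, b i = 1) :
    (∑ i, |a i - b i|)^2 ≤ 2 * ∑ i, (a i * Real.log (a i / b i) - a i + b i) := by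
  set f : ι → ℝ := fun i => Real.sqrt (2*a i + 4*b i) with hf_def
  set g : ι → ℝ := fun i => |a i - b i| / Real.sqrt (2*a i + 4*b i) with hg_def
  have hkey : ∀ i, |a i - b i| = f i * g i := by
    intro i
    rcases eq_or_lt_of_le (by linarith [ha i, hb i] : (0:ℝ) ≤ 2*a i + 4*b i) with h0 | hpos
    · have hai : a i = 0 := by linarith [ha i, hb i]
      have hbi : b i = 0 := by linarith [ha i, hb i]
      simp [hf_def, hg_def, hai, hbi]
    · have hfne : f i ≠ 0 := by
        simp only [hf_def]
        positivity
      rw [hg_def]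
      rw [mul_div_cancel₀ _ hfne]
  have hf2 : ∑ i, f i ^ 2 = 6 := by
    have : ∀ i, f i ^ 2 = 2*a i + 4*b i := by
      intro i
      rw [hf_def]
      exact Real.sq_sqrt (by linarith [ha i, hb i])
    rw [Finset.sum_congr rfl fun i _ => this i]
    rw [Finset.sum_add_distrib, ← Finset.mul_sum, ← Finset.mul_sum, hsa, hsb]
    norm_num
  have hg2 : ∑ i, g i ^ 2 ≤ (1/3) * ∑ i, (a i * Real.log (a i / b i) - a i + b i) := by
    rw [Finset.mul_sum]
    apply Finset.sum_le_sum
    intro i _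
    rcases eq_or_lt_of_le (hb i) with h0 | hbi
    · have hai : a i = 0 := hab i h0.symm
      simp [hg_def, hai, ← h0]
    · have hd := pinsker_pointwise (ha i) hbi
      have hpos : (0:ℝ) < 2*a i + 4*b i := by linarith [ha i]
      have : g i ^ 2 = (a i - b i)^2 / (2*a i + 4*b i) := by
        rw [hg_def]
        rw [div_pow, sq_abs, Real.sq_sqrt hpos.le]
      rw [this, div_le_iff₀ hpos]
      nlinarith
  calc (∑ i, |a i - b i|)^2 = (∑ i, f i * g i)^2 := by
        rw [Finset.sum_congr rfl fun i _ => hkey i]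
    _ ≤ (∑ i, f i ^ 2) * ∑ i, g i ^ 2 := Finset.sum_mul_sq_le_sq_mul_sq _ _ _
    _ ≤ 6 * ((1/3) * ∑ i, (a i * Real.log (a i / b i) - a i + b i)) := by
        rw [hf2]
        apply mul_le_mul_of_nonneg_left hg2 (by norm_num)
    _ = 2 * ∑ i, (a i * Real.log (a i / b i) - a i + b i) := by ring

section Marginals

variable {S X V : Type*} [Fintype S] [Fintype X] [Fintype V]

noncomputable def mS (p : S × X × V → ℝ) (s : S) : ℝ := ∑ x, ∑ v, p (s, x, v)
noncomputable def mX (p : S × X × V → ℝ) (x : X) : ℝ := ∑ s, ∑ v, p (s, x, v)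
noncomputable def mV (p : S × X × V → ℝ) (v : V) : ℝ := ∑ s, ∑ x, p (s, x, v)
noncomputable def mSV (p : S × X × V → ℝ) (s : S) (v : V) : ℝ := ∑ x, p (s, x, v)
noncomputable def mXV (p : S × X × V → ℝ) (x : X) (v : V) : ℝ := ∑ s, p (s, x, v)

variable (p : S × X × V → ℝ)

lemma mS_nonneg (hpos : ∀ y, 0 ≤ p y) (s : S) : 0 ≤ mS p s :=
  Finset.sum_nonneg fun _ _ => Finset.sum_nonneg fun _ _ => hpos _

lemma mV_nonneg (hpos : ∀ y, 0 ≤ p y) (v : V) : 0 ≤ mV p v :=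
  Finset.sum_nonneg fun _ _ => Finset.sum_nonneg fun _ _ => hpos _

lemma mSV_nonneg (hpos : ∀ y, 0 ≤ p y) (s : S) (v : V) : 0 ≤ mSV p s v :=
  Finset.sum_nonneg fun _ _ => hpos _

lemma mXV_nonneg (hpos : ∀ y, 0 ≤ p y) (x : X) (v : V) : 0 ≤ mXV p x v :=
  Finset.sum_nonneg fun _ _ => hpos _

lemma mSV_le_mS (hpos : ∀ y, 0 ≤ p y) (s : S) (v : V) : mSV p s v ≤ mS p s :=
  Finset.sum_le_sum fun x _ =>
    Finset.single_le_sum (fun v' _ => hpos (s, x, v')) (Finset.mem_univ v)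

lemma mSV_le_mV (hpos : ∀ y, 0 ≤ p y) (s : S) (v : V) : mSV p s v ≤ mV p v :=
  Finset.single_le_sum (fun s' _ => Finset.sum_nonneg fun x _ => hpos (s', x, v))
    (Finset.mem_univ s)

lemma mXV_le_mV (hpos : ∀ y, 0 ≤ p y) (x : X) (v : V) : mXV p x v ≤ mV p v :=
  Finset.sum_le_sum fun s _ =>
    Finset.single_le_sum (fun x' _ => hpos (s, x', v)) (Finset.mem_univ x)

lemma p_le_mSV (hpos : ∀ y, 0 ≤ p y) (s : S) (x : X) (v : V) : p (s, x, v) ≤ mSV p s v :=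
  Finset.single_le_sum (fun x' _ => hpos (s, x', v)) (Finset.mem_univ x)

lemma p_le_mXV (hpos : ∀ y, 0 ≤ p y) (s : S) (x : X) (v : V) : p (s, x, v) ≤ mXV p x v :=
  Finset.single_le_sum (fun s' _ => hpos (s', x, v)) (Finset.mem_univ s)

lemma sum_mSV_eq_mS (s : S) : ∑ v, mSV p s v = mS p s := by
  simp only [mSV, mS]; exact Finset.sum_comm

lemma sum_mXV_eq_mV (v : V) : ∑ x, mXV p x v = mV p v := by
  simp only [mXV, mV]; exact Finset.sum_comm

lemma sum_mXV_eq_mX (x : X) : ∑ v, mXV p x v = mX p x := by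
  simp only [mXV, mX]; exact Finset.sum_comm

lemma sum_mS_eq_one (hsum : ∑ y, p y = 1) : ∑ s, mS p s = 1 := by
  rw [← hsum]; simp only [mS, Fintype.sum_prod_type]

lemma sum_mV_eq_one (hsum : ∑ y, p y = 1) : ∑ v, mV p v = 1 := by
  simp only [mV]
  rw [Finset.sum_comm]
  rw [show (∑ s, ∑ v : V, ∑ x, p (s, x, v)) = ∑ s, ∑ x, ∑ v, p (s, x, v) from
    Finset.sum_congr rfl fun s _ => Finset.sum_comm]
  exact sum_mS_eq_one p hsum

lemma dTV_nonneg {α : Type*} [Fintype α] (f g : α → ℝ) : 0 ≤ dTV f g := by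
  rw [dTV]
  have : 0 ≤ ∑ x, |f x - g x| := Finset.sum_nonneg fun x _ => abs_nonneg _
  linarith

lemma part1 (hp : IsDist p)
    (hci : ∀ s x v, (∑ s', ∑ x', p (s', x', v)) ≠ 0 →
      p (s, x, v) * (∑ s', ∑ x', p (s', x', v)) =
        (∑ x', p (s, x', v)) * (∑ s', p (s', x, v))) :
    dTV (fun sx : S × X => ∑ v, p (sx.1, sx.2, v))
        (fun sx : S × X => mS p sx.1 * mX p sx.2) ≤
      ∑ s, mS p s * dTV (fun v => mSV p s v / mS p s) (mV p) := by
  obtain ⟨hpos, hsum⟩ := hp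
  have hci' : ∀ s x v, p (s, x, v) * mV p v = mSV p s v * mXV p x v := by
    intro s x v
    by_cases hv : mV p v = 0
    · have h2 : mSV p s v = 0 :=
        le_antisymm (hv ▸ mSV_le_mV p hpos s v) (mSV_nonneg p hpos s v)
      have h1 : p (s, x, v) = 0 :=
        le_antisymm (h2 ▸ p_le_mSV p hpos s x v) (hpos _)
      rw [h1, h2, hv]; ring
    · exact hci s x v hv
  have step1 : ∀ s x, |(∑ v, p (s, x, v)) - mS p s * mX p x| ≤
      ∑ v, mS p s * |mSV p s v / mS p s - mV p v| * (mXV p x v / mV p v) := by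
    intro s x
    have hX : mS p s * mX p x = ∑ v, mS p s * mXV p x v := by
      rw [← Finset.mul_sum, sum_mXV_eq_mX]
    rw [hX, ← Finset.sum_sub_distrib]
    refine le_trans (Finset.abs_sum_le_sum_abs _ _) (Finset.sum_le_sum ?_)
    intro v _
    by_cases hv : mV p v = 0
    · have h2 : mXV p x v = 0 :=
        le_antisymm (hv ▸ mXV_le_mV p hpos x v) (mXV_nonneg p hpos x v)
      have h1 : p (s, x, v) = 0 :=
        le_antisymm (h2 ▸ p_le_mXV p hpos s x v) (hpos _)
      rw [h1, h2]; simp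
    · by_cases hs : mS p s = 0
      · have h2 : mSV p s v = 0 :=
          le_antisymm (hs ▸ mSV_le_mS p hpos s v) (mSV_nonneg p hpos s v)
        have h1 : p (s, x, v) = 0 :=
          le_antisymm (h2 ▸ p_le_mSV p hpos s x v) (hpos _)
        rw [h1, h2, hs]; simp
      · have hveq : p (s, x, v) = mSV p s v * mXV p x v / mV p v := by
          rw [eq_div_iff hv]; exact hci' s x v
        have harg : p (s, x, v) - mS p s * mXV p x v =
            mS p s * (mSV p s v / mS p s - mV p v) * (mXV p x v / mV p v) := by
          rw [hveq]; field_simp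
        calc |p (s, x, v) - mS p s * mXV p x v|
            = |mS p s * (mSV p s v / mS p s - mV p v) * (mXV p x v / mV p v)| := by
              rw [harg]
          _ = mS p s * |mSV p s v / mS p s - mV p v| * (mXV p x v / mV p v) := by
              rw [abs_mul, abs_mul, abs_of_nonneg (mS_nonneg p hpos s),
                abs_of_nonneg (div_nonneg (mXV_nonneg p hpos x v) (mV_nonneg p hpos v))]
          _ ≤ _ := le_rfl
  have step2 : ∀ s, (∑ x, ∑ v, mS p s * |mSV p s v / mS p s - mV p v| * (mXV p x v / mV p v))
      ≤ ∑ v, mS p s * |mSV p s v / mS p s - mV p v| := by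
    intro s
    rw [Finset.sum_comm]
    apply Finset.sum_le_sum
    intro v _
    rw [← Finset.mul_sum, ← Finset.sum_div, sum_mXV_eq_mV]
    by_cases hv : mV p v = 0
    · rw [hv, div_zero, mul_zero]
      exact mul_nonneg (mS_nonneg p hpos s) (abs_nonneg _)
    · rw [div_self hv, mul_one]
  rw [dTV]
  rw [Fintype.sum_prod_type]
  calc (1/2 : ℝ) * ∑ s, ∑ x, |(∑ v, p (s, x, v)) - mS p s * mX p x|
      ≤ (1/2 : ℝ) * ∑ s, ∑ v, mS p s * |mSV p s v / mS p s - mV p v| := by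
        refine mul_le_mul_of_nonneg_left ?_ (by norm_num)
        refine Finset.sum_le_sum fun s _ => ?_
        exact le_trans (Finset.sum_le_sum fun x _ => step1 s x) (step2 s)
    _ = ∑ s, mS p s * dTV (fun v => mSV p s v / mS p s) (mV p) := by
        rw [Finset.mul_sum]
        refine Finset.sum_congr rfl fun s _ => ?_
        rw [dTV, ← Finset.mul_sum]
        ring

lemma part2 (hp : IsDist p) :
    ∑ s, mS p s * dTV (fun v => mSV p s v / mS p s) (mV p) ≤
      Real.sqrt (mutualInfo (fun sv : S × V => mSV p sv.1 sv.2) / 2) := by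
  obtain ⟨hpos, hsum⟩ := hp
  set t : S → ℝ := fun s => dTV (fun v => mSV p s v / mS p s) (mV p) with ht_def
  show ∑ s, mS p s * t s ≤ _
  have hV1 : ∑ v, mV p v = 1 := sum_mV_eq_one p hsum
  have hS1 : ∑ s, mS p s = 1 := sum_mS_eq_one p hsum
  have htnn : ∀ s, 0 ≤ t s := fun s => dTV_nonneg _ _
  have hTnn : 0 ≤ ∑ s, mS p s * t s :=
    Finset.sum_nonneg fun s _ => mul_nonneg (mS_nonneg p hpos s) (htnn s)
  have hpinsker : ∀ s, mS p s ≠ 0 →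
      t s ^ 2 ≤ (∑ v, ((mSV p s v / mS p s) * Real.log ((mSV p s v / mS p s) / mV p v)
        - mSV p s v / mS p s + mV p v)) / 2 := by
    intro s hs
    have hP := pinsker_sum (fun v => mSV p s v / mS p s) (mV p)
      (fun v => div_nonneg (mSV_nonneg p hpos s v) (mS_nonneg p hpos s))
      (fun v => mV_nonneg p hpos v)
      (fun v hv => by
        show mSV p s v / mS p s = 0
        have : mSV p s v = 0 :=
          le_antisymm (hv ▸ mSV_le_mV p hpos s v) (mSV_nonneg p hpos s v)
        rw [this, zero_div])
      (by rw [← Finset.sum_div, sum_mSV_eq_mS, div_self hs])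
      hV1
    have ht : t s = 1/2 * ∑ v, |mSV p s v / mS p s - mV p v| := rfl
    rw [ht]
    nlinarith [hP]
  have hCS : (∑ s, mS p s * t s) ^ 2 ≤ ∑ s, mS p s * t s ^ 2 := by
    have h := Finset.sum_mul_sq_le_sq_mul_sq Finset.univ
      (fun s => Real.sqrt (mS p s)) (fun s => Real.sqrt (mS p s) * t s)
    have h1 : ∀ s : S, Real.sqrt (mS p s) * (Real.sqrt (mS p s) * t s) = mS p s * t s := by
      intro s; rw [← mul_assoc, Real.mul_self_sqrt (mS_nonneg p hpos s)]
    have h2 : ∀ s : S, Real.sqrt (mS p s) ^ 2 = mS p s := fun s =>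
      Real.sq_sqrt (mS_nonneg p hpos s)
    have h3 : ∀ s : S, (Real.sqrt (mS p s) * t s) ^ 2 = mS p s * t s ^ 2 := by
      intro s; rw [mul_pow, h2]
    rw [Finset.sum_congr rfl fun s _ => h1 s, Finset.sum_congr rfl fun s _ => h2 s,
      Finset.sum_congr rfl fun s _ => h3 s, hS1, one_mul] at h
    exact h
  have hsum_le : ∑ s, mS p s * t s ^ 2 ≤
      ∑ s, mS p s * ((∑ v, ((mSV p s v / mS p s) * Real.log ((mSV p s v / mS p s) / mV p v)
        - mSV p s v / mS p s + mV p v)) / 2) := by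
    refine Finset.sum_le_sum fun s _ => ?_
    by_cases hs : mS p s = 0
    · rw [hs, zero_mul, zero_mul]
    · exact mul_le_mul_of_nonneg_left (hpinsker s hs) (mS_nonneg p hpos s)
  have hMI : ∑ s, mS p s * ((∑ v, ((mSV p s v / mS p s) * Real.log ((mSV p s v / mS p s) / mV p v)
        - mSV p s v / mS p s + mV p v)) / 2)
      = mutualInfo (fun sv : S × V => mSV p sv.1 sv.2) / 2 := by
    rw [show (∑ s, mS p s * ((∑ v, ((mSV p s v / mS p s) *
          Real.log ((mSV p s v / mS p s) / mV p v) - mSV p s v / mS p s + mV p v)) / 2))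
        = (∑ s, mS p s * (∑ v, ((mSV p s v / mS p s) *
          Real.log ((mSV p s v / mS p s) / mV p v) - mSV p s v / mS p s + mV p v))) / 2 from by
      rw [Finset.sum_div]; exact Finset.sum_congr rfl fun s _ => by ring]
    congr 1
    have hterm : ∀ s, mS p s * (∑ v, ((mSV p s v / mS p s) *
        Real.log ((mSV p s v / mS p s) / mV p v) - mSV p s v / mS p s + mV p v))
        = ∑ v, mS p s * ((mSV p s v / mS p s) * Real.log ((mSV p s v / mS p s) / mV p v)) := by
      intro s
      by_cases hs : mS p s = 0
      · rw [hs]; simp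
      · rw [Finset.mul_sum]
        have expand : ∀ v : V, mS p s * ((mSV p s v / mS p s) *
            Real.log ((mSV p s v / mS p s) / mV p v) - mSV p s v / mS p s + mV p v)
            = mS p s * ((mSV p s v / mS p s) * Real.log ((mSV p s v / mS p s) / mV p v))
              - mSV p s v + mS p s * mV p v := by
          intro v
          have hq : mS p s * (mSV p s v / mS p s) = mSV p s v := by field_simp
          calc mS p s * ((mSV p s v / mS p s) * Real.log ((mSV p s v / mS p s) / mV p v)
                - mSV p s v / mS p s + mV p v)
              = mS p s * ((mSV p s v / mS p s) * Real.log ((mSV p s v / mS p s) / mV p v))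
                - mS p s * (mSV p s v / mS p s) + mS p s * mV p v := by ring
            _ = _ := by rw [hq]
        rw [Finset.sum_congr rfl fun v _ => expand v]
        have e2 : ∑ v : V, mS p s * mV p v = mS p s := by
          rw [← Finset.mul_sum, hV1, mul_one]
        rw [Finset.sum_add_distrib, Finset.sum_sub_distrib, sum_mSV_eq_mS, e2]
        ring
    rw [Finset.sum_congr rfl fun s _ => hterm s]
    rw [mutualInfo, Fintype.sum_prod_type]
    refine Finset.sum_congr rfl fun s _ => Finset.sum_congr rfl fun v _ => ?_
    simp only
    by_cases h0 : mSV p s v = 0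
    · rw [if_pos h0, h0]; simp
    · rw [if_neg h0]
      have hs : mS p s ≠ 0 := by
        intro h
        exact h0 (le_antisymm (h ▸ mSV_le_mS p hpos s v) (mSV_nonneg p hpos s v))
      rw [show (∑ b, mSV p s b) = mS p s from sum_mSV_eq_mS p s]
      rw [show (∑ a, mSV p a v) = mV p v from rfl]
      rw [div_div]
      field_simp
  have hfin : (∑ s, mS p s * t s) ^ 2 ≤
      mutualInfo (fun sv : S × V => mSV p sv.1 sv.2) / 2 :=
    le_trans hCS (le_trans hsum_le (le_of_eq hMI))
  calc ∑ s, mS p s * t s = Real.sqrt ((∑ s, mS p s * t s) ^ 2) :=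
        (Real.sqrt_sq hTnn).symm
    _ ≤ _ := Real.sqrt_le_sqrt hfin

end Marginals

/-- If `(S, X, V)` are jointly distributed with `S` and `X` conditionally independent
given `V`, then `dTV((S,X), S ⊗ X) ≤ E_{s∼S}[dTV(V | S=s, V)] ≤ √(I(S;V)/2)`. -/
theorem stmt_13 {S X V : Type*} [Fintype S] [Fintype X] [Fintype V]
    (p : S × X × V → ℝ) (hp : IsDist p)
    (hci : ∀ s x v, (∑ s', ∑ x', p (s', x', v)) ≠ 0 →
      p (s, x, v) * (∑ s', ∑ x', p (s', x', v)) =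
        (∑ x', p (s, x', v)) * (∑ s', p (s', x, v))) :
    dTV (fun sx : S × X => ∑ v, p (sx.1, sx.2, v))
        (fun sx : S × X => (∑ x, ∑ v, p (sx.1, x, v)) * (∑ s, ∑ v, p (s, sx.2, v))) ≤
      ∑ s, (∑ x, ∑ v, p (s, x, v)) *
        dTV (fun v => (∑ x, p (s, x, v)) / ∑ x, ∑ v', p (s, x, v'))
            (fun v => ∑ s', ∑ x, p (s', x, v)) ∧
    ∑ s, (∑ x, ∑ v, p (s, x, v)) *
        dTV (fun v => (∑ x, p (s, x, v)) / ∑ x, ∑ v', p (s, x, v'))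
            (fun v => ∑ s', ∑ x, p (s', x, v)) ≤
      Real.sqrt (mutualInfo (fun sv : S × V => ∑ x, p (sv.1, x, sv.2)) / 2) := by
  exact ⟨part1 p hp hci, part2 p hp⟩
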